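/- Let I be a finite nonempty set, V : I → ℝ^d value vectors, and z : I → ℝ logits. Define the attention output O(z) = Σ_{u ∈ I} softmax(z)(u) • V u. If t ∈ I, I \ {t} is nonempty, and other logits are fixed, then as z t → -∞, O(z) converges to Σ_{u ∈ I \ {t}} softmax restricted to I \ {t} applied at u, scaled by V u. That is, the attention output with t masked equals the attention output computed without t in the limit. -/

import Mathlib

open Real Filter Finset

/-- As `z t → -∞`, the attention output over `I` converges to the attention
output computed over `I \ {t}`. -/
theorem attention_output_tendsto_masked
    {I : Type*} [Fintype I] [DecidableEq I] {d : ℕ}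
    (t : I) (z : I → ℝ) (V : I → EuclideanSpace ℝ (Fin d))
    (hNonempty : (Finset.univ.erase t).Nonempty) :
    Tendsto
      (fun x : ℝ =>
        ∑ u : I,
          (Real.exp (if u = t then x else z u) /
            ∑ v : I, Real.exp (if v = t then x else z v)) • V u)
      atBot
      (nhds (∑ u ∈ Finset.univ.erase t,
        (Real.exp (z u) / ∑ v ∈ Finset.univ.erase t, Real.exp (z v)) • V u)) := by
  set C : ℝ := ∑ v ∈ Finset.univ.erase t, Real.exp (z v) with hC
  have hCpos : 0 < C := Finset.sum_pos (fun v _ => Real.exp_pos _) hNonempty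
  have hden : ∀ x : ℝ, (∑ v : I, Real.exp (if v = t then x else z v)) = Real.exp x + C := by
    intro x
    rw [← Finset.add_sum_erase _ _ (Finset.mem_univ t)]
    simp only [if_pos rfl, hC]
    congr 1
    exact Finset.sum_congr rfl fun v hv => by rw [if_neg (Finset.ne_of_mem_erase hv)]
  have hdenlim : Tendsto (fun x : ℝ => Real.exp x + C) atBot (nhds C) := by
    have := Real.tendsto_exp_atBot.add tendsto_const_nhds (b := C)
    simpa using this
  have key : ∀ x : ℝ,
      (∑ u : I, (Real.exp (if u = t then x else z u) /
        ∑ v : I, Real.exp (if v = t then x else z v)) • V u)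
      = (Real.exp x / (Real.exp x + C)) • V t +
        ∑ u ∈ Finset.univ.erase t, (Real.exp (z u) / (Real.exp x + C)) • V u := by
    intro x
    rw [← Finset.add_sum_erase _ _ (Finset.mem_univ t), hden, if_pos rfl]
    congr 1
    exact Finset.sum_congr rfl fun u hu => by rw [if_neg (Finset.ne_of_mem_erase hu)]
  simp only [key]
  have h0 : Tendsto (fun x : ℝ => (Real.exp x / (Real.exp x + C)) • V t) atBot
      (nhds ((0 : ℝ) • V t)) := by
    apply Tendsto.smul_const
    have := Real.tendsto_exp_atBot.div hdenlim hCpos.ne'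
    rw [zero_div] at this
    exact this
  have h1 : Tendsto (fun x : ℝ =>
      ∑ u ∈ Finset.univ.erase t, (Real.exp (z u) / (Real.exp x + C)) • V u) atBot
      (nhds (∑ u ∈ Finset.univ.erase t, (Real.exp (z u) / C) • V u)) := by
    apply tendsto_finset_sum
    intro u _
    exact ((tendsto_const_nhds.div hdenlim hCpos.ne')).smul_const _
  have := h0.add h1
  simpa using this
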